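/- Let Ω = {Ω(n)}_{n≥1} be an expanding system of finite subsets of ℤ². Then limsup_{n→∞} β_{k,l}(n)/|Ω(n)| = 0 for all k,l ≥ 1 if and only if limsup_{n→∞} |∂Ω(n)|/|Ω(n)| = 0. -/

import Mathlib

open Filter
open scoped Classical

/-- The `m × n` rectangular lattice `Z_{m×n}(p)` with bottom-left corner `p`. -/
def Zrect (m n : ℕ) (p : ℤ × ℤ) : Finset (ℤ × ℤ) :=
  (Finset.range m ×ˢ Finset.range n).image (fun ab => (p.1 + (ab.1 : ℤ), p.2 + (ab.2 : ℤ)))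

/-- The number of patterns of `U` seen on the finite window `L`. -/
noncomputable def patternCount {A : Type*} (U : Set ((ℤ × ℤ) → A)) (L : Finset (ℤ × ℤ)) : ℕ :=
  Set.ncard ((fun x => fun p : L => x (p : ℤ × ℤ)) '' U)

/-- An additive shift space: nonempty, closed, translation invariant. -/
def IsShiftSpace {A : Type*} [TopologicalSpace A] (U : Set ((ℤ × ℤ) → A)) : Prop :=
  U.Nonempty ∧ IsClosed U ∧ ∀ v : ℤ × ℤ, ∀ x ∈ U, (fun p => x (p + v)) ∈ U

/-- An expanding system of finite sublattices of `ℤ²`. -/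
def IsExpandingSystem (Ω : ℕ → Finset (ℤ × ℤ)) : Prop :=
  (∀ n, Ω n ⊂ Ω (n + 1)) ∧ ∀ p : ℤ × ℤ, ∃ n, p ∈ Ω n

/-- The interior of a finite lattice. -/
def latInterior (L : Finset (ℤ × ℤ)) : Finset (ℤ × ℤ) :=
  L.filter (fun p => (p.1 + 1, p.2) ∈ L ∧ (p.1, p.2 + 1) ∈ L ∧ (p.1 + 1, p.2 + 1) ∈ L)

/-- The boundary of a finite lattice. -/
def latBoundary (L : Finset (ℤ × ℤ)) : Finset (ℤ × ℤ) := L \ latInterior L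

/-- The rectangular entropy `h_r(U)`. -/
noncomputable def rectEntropy {A : Type*} (U : Set ((ℤ × ℤ) → A)) : ℝ :=
  ⨅ mn : ℕ × ℕ, (1 / (((mn.1 + 1) * (mn.2 + 1) : ℕ) : ℝ)) *
    Real.log (patternCount U (Zrect (mn.1 + 1) (mn.2 + 1) (0, 0)))

/-- The entropy `h_Ω(U)` along an expanding system `Ω`. -/
noncomputable def entropyAlong {A : Type*} (U : Set ((ℤ × ℤ) → A)) (Ω : ℕ → Finset (ℤ × ℤ)) : ℝ :=
  Filter.limsup (fun n => (1 / ((Ω n).card : ℝ)) * Real.log (patternCount U (Ω n))) Filter.atTop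

/-- `Ω_{k,l}(n)`: the union of grid rectangles `Z_{k×l}((ak,bl))` contained in `L`. -/
noncomputable def gridPart (k l : ℕ) (L : Finset (ℤ × ℤ)) : Finset (ℤ × ℤ) :=
  L.filter (fun p => ∃ a b : ℤ,
    p ∈ Zrect k l ((k : ℤ) * a, (l : ℤ) * b) ∧ Zrect k l ((k : ℤ) * a, (l : ℤ) * b) ⊆ L)

/-- `β_{k,l}` : the size of the complement of the grid part. -/
noncomputable def betaKL (k l : ℕ) (L : Finset (ℤ × ℤ)) : ℕ := (L \ gridPart k l L).card

/-- `α_{k,l}` : the number of grid rectangles contained in `L`. -/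
noncomputable def alphaKL (k l : ℕ) (L : Finset (ℤ × ℤ)) : ℕ :=
  Set.ncard {ab : ℤ × ℤ | Zrect k l ((k : ℤ) * ab.1, (l : ℤ) * ab.2) ⊆ L}

/-- A tessellation of `ℤ²`. -/
def IsTessellation (T : Finset (ℤ × ℤ)) : Prop :=
  ∃ v : ℕ → ℤ × ℤ,
    (∀ i j : ℕ, i ≠ j → Disjoint (T.image (· + v i)) (T.image (· + v j))) ∧
    ∀ p : ℤ × ℤ, ∃ i : ℕ, p ∈ T.image (· + v i)

/-- Euclidean distance between points of `ℤ²`. -/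
noncomputable def euclDist (p q : ℤ × ℤ) : ℝ :=
  Real.sqrt (((p.1 - q.1 : ℤ) : ℝ) ^ 2 + ((p.2 - q.2 : ℤ) : ℝ) ^ 2)

/-- Block gluing with gap `M`. -/
def BlockGluingWithGap {A : Type*} (U : Set ((ℤ × ℤ) → A)) (M : ℕ) : Prop :=
  ∀ (m₁ n₁ m₂ n₂ : ℕ) (c₁ c₂ : ℤ × ℤ),
    (∀ p ∈ Zrect m₁ n₁ c₁, ∀ q ∈ Zrect m₂ n₂ c₂, (M : ℝ) ≤ euclDist p q) →
    ∀ x₁ ∈ U, ∀ x₂ ∈ U, ∃ x ∈ U,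
      (∀ p ∈ Zrect m₁ n₁ c₁, x p = x₁ p) ∧ ∀ q ∈ Zrect m₂ n₂ c₂, x q = x₂ q

/-- Block gluing. -/
def IsBlockGluing {A : Type*} (U : Set ((ℤ × ℤ) → A)) : Prop :=
  ∃ M : ℕ, 1 ≤ M ∧ BlockGluingWithGap U M

/-- A full shift on a sub-alphabet. -/
def IsFullShift {A : Type*} (U : Set ((ℤ × ℤ) → A)) : Prop :=
  ∃ B : Set A, U = {x | ∀ p : ℤ × ℤ, x p ∈ B}

/-- Shift of finite type. -/
def IsSFT {A : Type*} (U : Set ((ℤ × ℤ) → A)) : Prop :=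
  ∃ (F : Finset (ℤ × ℤ)) (P : Set (F → A)),
    U = {x | ∀ v : ℤ × ℤ, (fun p : F => x (v + (p : ℤ × ℤ))) ∈ P}

/-- `(i,j)` has horizontal length `m` in `L`. -/
def HasHorizLength (L : Finset (ℤ × ℤ)) (p : ℤ × ℤ) (m : ℕ) : Prop :=
  1 ≤ m ∧ (∃ c : ℤ × ℤ, p ∈ Zrect m 1 c ∧ Zrect m 1 c ⊆ L) ∧
    ∀ m' : ℕ, m < m' → ¬ ∃ c : ℤ × ℤ, p ∈ Zrect m' 1 c ∧ Zrect m' 1 c ⊆ L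

/-- `(i,j)` has vertical length `m` in `L`. -/
def HasVertLength (L : Finset (ℤ × ℤ)) (p : ℤ × ℤ) (m : ℕ) : Prop :=
  1 ≤ m ∧ (∃ c : ℤ × ℤ, p ∈ Zrect 1 m c ∧ Zrect 1 m c ⊆ L) ∧
    ∀ m' : ℕ, m < m' → ¬ ∃ c : ℤ × ℤ, p ∈ Zrect 1 m' c ∧ Zrect 1 m' c ⊆ L

noncomputable def betaHoriz (m : ℕ) (L : Finset (ℤ × ℤ)) : ℕ :=
  (L.filter (fun p => HasHorizLength L p m)).card

noncomputable def betaVert (m : ℕ) (L : Finset (ℤ × ℤ)) : ℕ :=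
  (L.filter (fun p => HasVertLength L p m)).card

/-- The one-dimensional sublattice segment `{s • v : 0 ≤ s ≤ n-1}`. -/
def lineSegment (v : ℤ × ℤ) (n : ℕ) : Finset (ℤ × ℤ) :=
  (Finset.range n).image (fun s : ℕ => ((s : ℤ) * v.1, (s : ℤ) * v.2))

/-- The projectional entropy along the one-dimensional sublattice generated by `v`. -/
noncomputable def projEntropy {A : Type*} (U : Set ((ℤ × ℤ) → A)) (v : ℤ × ℤ) : ℝ :=
  ⨅ n : ℕ, (1 / (n + 1 : ℝ)) * Real.log (patternCount U (lineSegment v (n + 1)))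

/-- `ĥ⁽¹⁾(U)`: supremum of projectional entropies over one-dimensional sublattices. -/
noncomputable def hHatOne {A : Type*} (U : Set ((ℤ × ℤ) → A)) : ℝ :=
  ⨆ v : {w : ℤ × ℤ // w ≠ 0}, projEntropy U (v : ℤ × ℤ)

/-- The horizontal golden-mean shift. -/
def goldenMeanShift : Set ((ℤ × ℤ) → Fin 2) :=
  {x | ∀ p : ℤ × ℤ, x p * x (p.1 + 1, p.2) = 0}

/-- The sequence `a_k`: `a_1 = 2`, `a_2 = 3`, `a_k = a_{k-1} + a_{k-2}`. -/
def aSeq : ℕ → ℕ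
  | 0 => 1
  | 1 => 2
  | (k + 2) => aSeq (k + 1) + aSeq k


lemma mem_Zrect {m n : ℕ} {c p : ℤ × ℤ} :
    p ∈ Zrect m n c ↔ c.1 ≤ p.1 ∧ p.1 < c.1 + m ∧ c.2 ≤ p.2 ∧ p.2 < c.2 + n := by
  simp only [Zrect, Finset.mem_image, Finset.mem_product, Finset.mem_range, Prod.exists]
  constructor
  · rintro ⟨a, b, ⟨ha, hb⟩, rfl⟩
    simp; omega
  · rintro ⟨h1, h2, h3, h4⟩
    exact ⟨(p.1 - c.1).toNat, (p.2 - c.2).toNat, ⟨by omega, by omega⟩, by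
      simp only [Prod.ext_iff]; constructor <;> simp <;> omega⟩

lemma card_Zrect (m n : ℕ) (c : ℤ × ℤ) : (Zrect m n c).card = m * n := by
  rw [Zrect, Finset.card_image_of_injective, Finset.card_product, Finset.card_range,
    Finset.card_range]
  intro a b hab
  simp only [Prod.ext_iff] at hab
  exact Prod.ext (by omega) (by omega)

lemma block_eq {k l : ℕ} (hk : 1 ≤ k) (hl : 1 ≤ l) {a b a' b' : ℤ} {p : ℤ × ℤ}
    (h : p ∈ Zrect k l ((k : ℤ) * a, (l : ℤ) * b))
    (h' : p ∈ Zrect k l ((k : ℤ) * a', (l : ℤ) * b')) : a = a' ∧ b = b' := by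
  rw [mem_Zrect] at h h'
  simp only at h h'
  have hk0 : (0 : ℤ) < k := by exact_mod_cast hk
  have hl0 : (0 : ℤ) < l := by exact_mod_cast hl
  constructor
  · have h1 : (k : ℤ) * a < (k : ℤ) * (a' + 1) := by rw [mul_add]; omega
    have h2 : (k : ℤ) * a' < (k : ℤ) * (a + 1) := by rw [mul_add]; omega
    have := lt_of_mul_lt_mul_left h1 hk0.le
    have := lt_of_mul_lt_mul_left h2 hk0.le
    omega
  · have h1 : (l : ℤ) * b < (l : ℤ) * (b' + 1) := by rw [mul_add]; omega
    have h2 : (l : ℤ) * b' < (l : ℤ) * (b + 1) := by rw [mul_add]; omega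
    have := lt_of_mul_lt_mul_left h1 hl0.le
    have := lt_of_mul_lt_mul_left h2 hl0.le
    omega

lemma mem_canonical {k l : ℕ} (hk : 1 ≤ k) (hl : 1 ≤ l) (p : ℤ × ℤ) :
    p ∈ Zrect k l ((k : ℤ) * (p.1 / k), (l : ℤ) * (p.2 / l)) := by
  have hk0 : (0 : ℤ) < k := by exact_mod_cast hk
  have hl0 : (0 : ℤ) < l := by exact_mod_cast hl
  rw [mem_Zrect]
  have e1 := Int.mul_ediv_add_emod p.1 k
  have e2 := Int.mul_ediv_add_emod p.2 l
  have r1 := Int.emod_nonneg p.1 (by omega : (k:ℤ) ≠ 0)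
  have r2 := Int.emod_nonneg p.2 (by omega : (l:ℤ) ≠ 0)
  have s1 := Int.emod_lt_of_pos p.1 hk0
  have s2 := Int.emod_lt_of_pos p.2 hl0
  simp only
  omega

lemma mem_latBoundary {L : Finset (ℤ × ℤ)} {p : ℤ × ℤ} :
    p ∈ latBoundary L ↔ p ∈ L ∧
      ¬((p.1 + 1, p.2) ∈ L ∧ (p.1, p.2 + 1) ∈ L ∧ (p.1 + 1, p.2 + 1) ∈ L) := by
  simp [latBoundary, latInterior, Finset.mem_sdiff, Finset.mem_filter]
  tauto

lemma mem_boundary_of_missing {L : Finset (ℤ × ℤ)} {p q : ℤ × ℤ} (hp : p ∈ L)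
    (hq : q = (p.1 + 1, p.2) ∨ q = (p.1, p.2 + 1) ∨ q = (p.1 + 1, p.2 + 1))
    (hq' : q ∉ L) : p ∈ latBoundary L := by
  rw [mem_latBoundary]
  refine ⟨hp, fun hc => ?_⟩
  rcases hq with rfl | rfl | rfl <;> tauto

lemma mem_gridPart {k l : ℕ} (hk : 1 ≤ k) (hl : 1 ≤ l) {L : Finset (ℤ × ℤ)} {p : ℤ × ℤ} :
    p ∈ gridPart k l L ↔ p ∈ L ∧
      Zrect k l ((k : ℤ) * (p.1 / k), (l : ℤ) * (p.2 / l)) ⊆ L := by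
  rw [gridPart, Finset.mem_filter]
  constructor
  · rintro ⟨hpL, a, b, hpm, hsub⟩
    obtain ⟨ha, hb⟩ := block_eq hk hl hpm (mem_canonical hk hl p)
    rw [← ha, ← hb]
    exact ⟨hpL, hsub⟩
  · rintro ⟨hpL, hsub⟩
    exact ⟨hpL, p.1 / k, p.2 / l, mem_canonical hk hl p, hsub⟩

lemma lemmaA {k l : ℕ} (hk : 1 ≤ k) (hl : 1 ≤ l) (L : Finset (ℤ × ℤ)) :
    k * l * (latBoundary L).card ≤ k * l * betaKL k l L + (k + l) * L.card := by
  classical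
  set φ : ℤ × ℤ → ℤ × ℤ := fun p => (p.1 / (k : ℤ), p.2 / (l : ℤ)) with hφ
  set S : Finset (ℤ × ℤ) := latBoundary L ∩ gridPart k l L with hS
  set T : Finset (ℤ × ℤ) := S.image φ with hT
  -- Step 1
  have step1 : (latBoundary L).card ≤ betaKL k l L + S.card := by
    have hsub : latBoundary L ⊆ (L \ gridPart k l L) ∪ S := by
      intro p hp
      have hpL : p ∈ L := (mem_latBoundary.mp hp).1
      by_cases hg : p ∈ gridPart k l L
      · exact Finset.mem_union_right _ (Finset.mem_inter.mpr ⟨hp, hg⟩)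
      · exact Finset.mem_union_left _ (Finset.mem_sdiff.mpr ⟨hpL, hg⟩)
    calc (latBoundary L).card ≤ ((L \ gridPart k l L) ∪ S).card := Finset.card_le_card hsub
      _ ≤ betaKL k l L + S.card := Finset.card_union_le _ _
  -- Step 2
  have step2 : S.card ≤ (k + l) * T.card := by
    apply Finset.card_le_mul_card_image
    rintro ⟨a, b⟩ hab
    have hsub : {p ∈ S | φ p = (a, b)} ⊆
        Zrect k 1 ((k : ℤ) * a, (l : ℤ) * b + (l - 1 : ℕ)) ∪
          Zrect 1 l ((k : ℤ) * a + (k - 1 : ℕ), (l : ℤ) * b) := by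
      intro p hp
      rw [Finset.mem_filter] at hp
      obtain ⟨hpS, hpφ⟩ := hp
      rw [Finset.mem_inter] at hpS
      obtain ⟨hpB, hpG⟩ := hpS
      have ha : p.1 / (k : ℤ) = a := by
        have := congrArg Prod.fst hpφ; simpa [hφ] using this
      have hb : p.2 / (l : ℤ) = b := by
        have := congrArg Prod.snd hpφ; simpa [hφ] using this
      rw [mem_gridPart hk hl, ha, hb] at hpG
      obtain ⟨hpL, hRsub⟩ := hpG
      have hpR : p ∈ Zrect k l ((k : ℤ) * a, (l : ℤ) * b) := by
        have := mem_canonical hk hl p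
        rwa [ha, hb] at this
      rw [mem_Zrect] at hpR
      simp only at hpR
      rw [mem_latBoundary] at hpB
      obtain ⟨-, hni⟩ := hpB
      set ka := (k : ℤ) * a with hka
      set lb := (l : ℤ) * b with hlb
      have hedge : p.1 = ka + k - 1 ∨ p.2 = lb + l - 1 := by
        by_contra hcon
        push_neg at hcon
        apply hni
        refine ⟨hRsub ?_, hRsub ?_, hRsub ?_⟩ <;> · rw [mem_Zrect]; simp only; omega
      rw [Finset.mem_union, mem_Zrect, mem_Zrect]
      simp only
      omega
    calc ({p ∈ S | φ p = (a, b)}).card ≤ _ := Finset.card_le_card hsub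
      _ ≤ (Zrect k 1 ((k : ℤ) * a, (l : ℤ) * b + (l - 1 : ℕ))).card +
          (Zrect 1 l ((k : ℤ) * a + (k - 1 : ℕ), (l : ℤ) * b)).card :=
        Finset.card_union_le _ _
      _ = k + l := by rw [card_Zrect, card_Zrect]; ring
  -- Step 3
  have step3 : k * l * T.card ≤ L.card := by
    have hdisj : ∀ x ∈ T, ∀ y ∈ T, x ≠ y →
        Disjoint (Zrect k l ((k : ℤ) * x.1, (l : ℤ) * x.2))
          (Zrect k l ((k : ℤ) * y.1, (l : ℤ) * y.2)) := by
      rintro ⟨a, b⟩ - ⟨a', b'⟩ - hne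
      rw [Finset.disjoint_left]
      intro q hq hq'
      obtain ⟨h1, h2⟩ := block_eq hk hl hq hq'
      simp only at h1 h2
      exact hne (by simp [h1, h2])
    have hUsub : T.biUnion (fun ab => Zrect k l ((k : ℤ) * ab.1, (l : ℤ) * ab.2)) ⊆ L := by
      intro q hq
      rw [Finset.mem_biUnion] at hq
      obtain ⟨⟨a, b⟩, hab, hqR⟩ := hq
      rw [hT, Finset.mem_image] at hab
      obtain ⟨p, hpS, hpφ⟩ := hab
      rw [hS, Finset.mem_inter] at hpS
      have hpG := hpS.2
      rw [mem_gridPart hk hl] at hpG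
      have ha : p.1 / (k : ℤ) = a := by
        have := congrArg Prod.fst hpφ; simpa [hφ] using this
      have hb : p.2 / (l : ℤ) = b := by
        have := congrArg Prod.snd hpφ; simpa [hφ] using this
      rw [ha, hb] at hpG
      exact hpG.2 hqR
    calc k * l * T.card = ∑ ab ∈ T, (Zrect k l ((k : ℤ) * ab.1, (l : ℤ) * ab.2)).card := by
          simp [card_Zrect, mul_comm]
      _ = (T.biUnion (fun ab => Zrect k l ((k : ℤ) * ab.1, (l : ℤ) * ab.2))).card :=
          (Finset.card_biUnion hdisj).symm
      _ ≤ L.card := Finset.card_le_card hUsub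
  calc k * l * (latBoundary L).card ≤ k * l * (betaKL k l L + (k + l) * T.card) :=
        Nat.mul_le_mul_left _ (step1.trans (Nat.add_le_add_left (step2) _))
    _ = k * l * betaKL k l L + (k + l) * (k * l * T.card) := by ring
    _ ≤ k * l * betaKL k l L + (k + l) * L.card :=
        Nat.add_le_add_left (Nat.mul_le_mul_left _ step3) _

lemma exists_boundary_runH (L : Finset (ℤ × ℤ)) {q : ℤ × ℤ} (h1 : (q.1 + 1, q.2) ∈ L) :
    ∃ r : ℤ × ℤ, r.2 = q.2 ∧ q.1 < r.1 ∧ r ∈ latBoundary L ∧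
      ∀ i : ℤ, q.1 < i → i ≤ r.1 → (i, q.2) ∈ L := by
  have hex : ∃ n : ℕ, ((q.1 + n + 2 : ℤ), q.2) ∉ L := by
    by_contra hc
    push_neg at hc
    have : (L : Set (ℤ × ℤ)).Infinite := by
      apply Set.infinite_of_injective_forall_mem (f := fun n : ℕ => ((q.1 + n + 2 : ℤ), q.2))
        (fun m n hmn => by simp only [Prod.ext_iff] at hmn; omega)
        (fun n => by exact_mod_cast hc n)
    exact this L.finite_toSet
  set N := Nat.find hex with hN
  have hPN : ((q.1 + N + 2 : ℤ), q.2) ∉ L := Nat.find_spec hex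
  have hrun : ∀ i : ℤ, q.1 < i → i ≤ q.1 + N + 1 → (i, q.2) ∈ L := by
    intro i hi1 hi2
    rcases eq_or_lt_of_le (by omega : q.1 + 1 ≤ i) with heq | hlt
    · rw [← heq]; exact h1
    · have hn : ∃ n : ℕ, i = q.1 + n + 2 ∧ n < N := ⟨(i - q.1 - 2).toNat, by omega, by omega⟩
      obtain ⟨n, rfl, hnN⟩ := hn
      have := Nat.find_min hex hnN
      simpa using this
  refine ⟨(q.1 + N + 1, q.2), rfl, by omega, ?_, hrun⟩
  exact mem_boundary_of_missing (hrun _ (by omega) (by omega))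
    (Or.inl (by simp; ring))
    (by rw [show (q.1 + (N : ℤ) + 1 + 1 : ℤ) = q.1 + N + 2 from by ring]; exact hPN)

lemma exists_boundary_runV (L : Finset (ℤ × ℤ)) {q : ℤ × ℤ} (h1 : (q.1, q.2 + 1) ∈ L) :
    ∃ r : ℤ × ℤ, r.1 = q.1 ∧ q.2 < r.2 ∧ r ∈ latBoundary L ∧
      ∀ i : ℤ, q.2 < i → i ≤ r.2 → (q.1, i) ∈ L := by
  have hex : ∃ n : ℕ, (q.1, (q.2 + n + 2 : ℤ)) ∉ L := by
    by_contra hc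
    push_neg at hc
    have : (L : Set (ℤ × ℤ)).Infinite := by
      apply Set.infinite_of_injective_forall_mem (f := fun n : ℕ => (q.1, (q.2 + n + 2 : ℤ)))
        (fun m n hmn => by simp only [Prod.ext_iff] at hmn; omega)
        (fun n => by exact_mod_cast hc n)
    exact this L.finite_toSet
  set N := Nat.find hex with hN
  have hPN : (q.1, (q.2 + N + 2 : ℤ)) ∉ L := Nat.find_spec hex
  have hrun : ∀ i : ℤ, q.2 < i → i ≤ q.2 + N + 1 → (q.1, i) ∈ L := by
    intro i hi1 hi2
    rcases eq_or_lt_of_le (by omega : q.2 + 1 ≤ i) with heq | hlt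
    · rw [← heq]; exact h1
    · have hn : ∃ n : ℕ, i = q.2 + n + 2 ∧ n < N := ⟨(i - q.2 - 2).toNat, by omega, by omega⟩
      obtain ⟨n, rfl, hnN⟩ := hn
      have := Nat.find_min hex hnN
      simpa using this
  refine ⟨(q.1, q.2 + N + 1), rfl, by omega, ?_, hrun⟩
  exact mem_boundary_of_missing (hrun _ (by omega) (by omega))
    (Or.inr (Or.inl (by simp; ring)))
    (by rw [show (q.2 + (N : ℤ) + 1 + 1 : ℤ) = q.2 + N + 2 from by ring]; exact hPN)

lemma rect_marked {k l : ℕ} (hk : 1 ≤ k) (hl : 1 ≤ l) {L : Finset (ℤ × ℤ)} {a b : ℤ}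
    (hmeet : ∃ p ∈ Zrect k l ((k : ℤ) * a, (l : ℤ) * b), p ∈ L)
    (hnot : ¬ Zrect k l ((k : ℤ) * a, (l : ℤ) * b) ⊆ L) :
    ∃ q ∈ Zrect k l ((k : ℤ) * a, (l : ℤ) * b),
      q ∈ latBoundary L ∨ (q ∉ L ∧ (q.1 + 1, q.2) ∈ L) ∨ (q ∉ L ∧ (q.1, q.2 + 1) ∈ L) := by
  by_contra hcon
  push_neg at hcon
  apply hnot
  obtain ⟨p, hpR, hpL⟩ := hmeet
  set ka := (k : ℤ) * a with hka
  set lb := (l : ℤ) * b with hlb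
  set R := Zrect k l (ka, lb) with hR
  -- basic rules
  have rule_up : ∀ q : ℤ × ℤ, q ∈ R → q ∈ L → (q.1 + 1, q.2) ∈ L ∧ (q.1, q.2 + 1) ∈ L := by
    intro q hqR hqL
    have hnb := (hcon q hqR).1
    constructor
    · by_contra hx
      exact hnb (mem_boundary_of_missing hqL (Or.inl rfl) hx)
    · by_contra hx
      exact hnb (mem_boundary_of_missing hqL (Or.inr (Or.inl rfl)) hx)
  have rule_down1 : ∀ q : ℤ × ℤ, q ∈ R → (q.1 + 1, q.2) ∈ L → q ∈ L := by
    intro q hqR hnb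
    by_contra hx
    exact (hcon q hqR).2.1 hx hnb
  have rule_down2 : ∀ q : ℤ × ℤ, q ∈ R → (q.1, q.2 + 1) ∈ L → q ∈ L := by
    intro q hqR hnb
    by_contra hx
    exact (hcon q hqR).2.2 hx hnb
  have hmemR : ∀ x y : ℤ, ((x, y) ∈ R ↔ ka ≤ x ∧ x < ka + k ∧ lb ≤ y ∧ y < lb + l) := by
    intro x y; rw [hR, mem_Zrect]
  have hpR' : ka ≤ p.1 ∧ p.1 < ka + k ∧ lb ≤ p.2 ∧ p.2 < lb + l := by
    have := hpR; rw [hR, mem_Zrect] at this; exact this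
  -- march right from p
  have haux1 : ∀ i : ℕ, p.1 + i < ka + k → (p.1 + i, p.2) ∈ L := by
    intro i
    induction i with
    | zero => intro _; simpa using hpL
    | succ i ih =>
      intro hi
      push_cast at hi ⊢
      have h1 : (p.1 + i, p.2) ∈ L := ih (by omega)
      have h2 : (p.1 + i, p.2) ∈ R := (hmemR _ _).mpr (by omega)
      have := (rule_up _ h2 h1).1
      simpa [add_assoc] using this
  -- march up on the right edge
  have haux2 : ∀ j : ℕ, p.2 + j < lb + l → (ka + k - 1, p.2 + j) ∈ L := by
    intro j
    induction j with
    | zero =>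
      intro _
      have := haux1 (ka + k - 1 - p.1).toNat (by omega)
      have he : p.1 + ((ka + k - 1 - p.1).toNat : ℤ) = ka + k - 1 := by omega
      rw [he] at this
      simpa using this
    | succ j ih =>
      intro hj
      push_cast at hj ⊢
      have h1 : (ka + k - 1, p.2 + j) ∈ L := ih (by omega)
      have h2 : ((ka + k - 1 : ℤ), p.2 + (j : ℤ)) ∈ R := (hmemR _ _).mpr (by omega)
      have := (rule_up _ h2 h1).2
      simpa [add_assoc] using this
  have ht : ((ka + k - 1 : ℤ), (lb + l - 1 : ℤ)) ∈ L := by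
    have := haux2 (lb + l - 1 - p.2).toNat (by omega)
    have he : p.2 + ((lb + l - 1 - p.2).toNat : ℤ) = lb + l - 1 := by omega
    rwa [he] at this
  -- march left along the top edge
  have hdown1 : ∀ i : ℕ, (i : ℤ) < k → ((ka + k - 1 - i : ℤ), (lb + l - 1 : ℤ)) ∈ L := by
    intro i
    induction i with
    | zero => intro _; simpa using ht
    | succ i ih =>
      intro hi
      push_cast at hi ⊢
      have h1 := ih (by omega)
      have h2 : ((ka + k - 1 - (i + 1) : ℤ), (lb + l - 1 : ℤ)) ∈ R := (hmemR _ _).mpr (by omega)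
      apply rule_down1 _ h2
      have he : (ka + k - 1 - (i + 1) + 1 : ℤ) = ka + k - 1 - i := by ring
      rw [he]
      exact h1
  -- march down
  have hdown : ∀ i j : ℕ, (i : ℤ) < k → (j : ℤ) < l →
      ((ka + k - 1 - i : ℤ), (lb + l - 1 - j : ℤ)) ∈ L := by
    intro i j hi
    induction j with
    | zero => intro _; simpa using hdown1 i hi
    | succ j ih =>
      intro hj
      push_cast at hj ⊢
      have h1 := ih (by omega)
      have h2 : ((ka + k - 1 - i : ℤ), (lb + l - 1 - (j + 1) : ℤ)) ∈ R := (hmemR _ _).mpr (by omega)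
      apply rule_down2 _ h2
      have he : (lb + l - 1 - (j + 1) + 1 : ℤ) = lb + l - 1 - j := by ring
      rw [he]
      exact h1
  -- conclude R ⊆ L
  intro q hq
  have hq' : ka ≤ q.1 ∧ q.1 < ka + k ∧ lb ≤ q.2 ∧ q.2 < lb + l := by
    have := hq; rw [mem_Zrect] at this; exact this
  have := hdown (ka + k - 1 - q.1).toNat (lb + l - 1 - q.2).toNat (by omega) (by omega)
  have he1 : (ka + k - 1 - ((ka + k - 1 - q.1).toNat : ℤ)) = q.1 := by omega
  have he2 : (lb + l - 1 - ((lb + l - 1 - q.2).toNat : ℤ)) = q.2 := by omega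
  rw [he1, he2] at this
  simpa using this

lemma lemmaB {k l : ℕ} (hk : 1 ≤ k) (hl : 1 ≤ l) (L : Finset (ℤ × ℤ)) :
    betaKL k l L ≤ k * l * (3 * (latBoundary L).card) := by
  classical
  set φ : ℤ × ℤ → ℤ × ℤ := fun p => (p.1 / (k : ℤ), p.2 / (l : ℤ)) with hφ
  set ω : Finset (ℤ × ℤ) := L \ gridPart k l L with hω
  set G : Finset (ℤ × ℤ) := ω.image φ with hG
  have hGprop : ∀ ab ∈ G, (∃ p ∈ Zrect k l ((k : ℤ) * ab.1, (l : ℤ) * ab.2), p ∈ L) ∧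
      ¬ Zrect k l ((k : ℤ) * ab.1, (l : ℤ) * ab.2) ⊆ L := by
    rintro ⟨a, b⟩ hab
    rw [hG, Finset.mem_image] at hab
    obtain ⟨p, hpω, hpφ⟩ := hab
    rw [hω, Finset.mem_sdiff] at hpω
    obtain ⟨hpL, hpg⟩ := hpω
    have ha : p.1 / (k : ℤ) = a := by
      have := congrArg Prod.fst hpφ; simpa [hφ] using this
    have hb : p.2 / (l : ℤ) = b := by
      have := congrArg Prod.snd hpφ; simpa [hφ] using this
    have hpR : p ∈ Zrect k l ((k : ℤ) * a, (l : ℤ) * b) := by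
      have := mem_canonical hk hl p; rwa [ha, hb] at this
    refine ⟨⟨p, hpR, hpL⟩, fun hsub => hpg ?_⟩
    rw [mem_gridPart hk hl, ha, hb]
    exact ⟨hpL, hsub⟩
  -- step 1 : β ≤ k*l*|G|
  have step1 : betaKL k l L ≤ k * l * G.card := by
    rw [betaKL, ← hω]
    apply Finset.card_le_mul_card_image
    rintro ⟨a, b⟩ hab
    have hsub : {p ∈ ω | φ p = (a, b)} ⊆ Zrect k l ((k : ℤ) * a, (l : ℤ) * b) := by
      intro p hp
      rw [Finset.mem_filter] at hp
      obtain ⟨-, hpφ⟩ := hp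
      have ha : p.1 / (k : ℤ) = a := by
        have := congrArg Prod.fst hpφ; simpa [hφ] using this
      have hb : p.2 / (l : ℤ) = b := by
        have := congrArg Prod.snd hpφ; simpa [hφ] using this
      have := mem_canonical hk hl p; rwa [ha, hb] at this
    calc ({p ∈ ω | φ p = (a, b)}).card ≤ _ := Finset.card_le_card hsub
      _ = k * l := card_Zrect k l _
  -- the marking function
  set mfun : ℤ × ℤ → ℤ × ℤ := fun ab =>
    if h : (∃ p ∈ Zrect k l ((k : ℤ) * ab.1, (l : ℤ) * ab.2), p ∈ L) ∧
        ¬ Zrect k l ((k : ℤ) * ab.1, (l : ℤ) * ab.2) ⊆ L then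
      Classical.choose (rect_marked hk hl h.1 h.2)
    else ab with hmfun
  have hmspec : ∀ ab ∈ G, mfun ab ∈ Zrect k l ((k : ℤ) * ab.1, (l : ℤ) * ab.2) ∧
      (mfun ab ∈ latBoundary L ∨ (mfun ab ∉ L ∧ ((mfun ab).1 + 1, (mfun ab).2) ∈ L) ∨
        (mfun ab ∉ L ∧ ((mfun ab).1, (mfun ab).2 + 1) ∈ L)) := by
    intro ab hab
    have h := hGprop ab hab
    rw [hmfun]
    simp only [dif_pos h]
    exact Classical.choose_spec (rect_marked hk hl h.1 h.2)
  have hminj : Set.InjOn mfun G := by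
    intro ab hab ab' hab' heq
    have h1 := (hmspec ab (by exact_mod_cast hab)).1
    have h2 := (hmspec ab' (by exact_mod_cast hab')).1
    rw [heq] at h1
    obtain ⟨e1, e2⟩ := block_eq hk hl h1 h2
    exact Prod.ext e1 e2
  set M : Finset (ℤ × ℤ) := G.image mfun with hM
  have hcardGM : G.card = M.card := (Finset.card_image_of_injOn hminj).symm
  have hMprop : ∀ q ∈ M, q ∈ latBoundary L ∨ (q ∉ L ∧ (q.1 + 1, q.2) ∈ L) ∨
      (q ∉ L ∧ (q.1, q.2 + 1) ∈ L) := by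
    intro q hq
    rw [hM, Finset.mem_image] at hq
    obtain ⟨ab, hab, rfl⟩ := hq
    exact (hmspec ab hab).2
  -- split M into three parts
  set M0 := M.filter (fun q => q ∈ latBoundary L) with hM0
  set M1 := M.filter (fun q => q ∉ L ∧ (q.1 + 1, q.2) ∈ L) with hM1
  set M2 := M.filter (fun q => q ∉ L ∧ (q.1, q.2 + 1) ∈ L) with hM2
  have hMsub : M ⊆ M0 ∪ M1 ∪ M2 := by
    intro q hq
    rcases hMprop q hq with h | h | h
    · exact Finset.mem_union_left _ (Finset.mem_union_left _ (Finset.mem_filter.mpr ⟨hq, h⟩))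
    · exact Finset.mem_union_left _ (Finset.mem_union_right _ (Finset.mem_filter.mpr ⟨hq, h⟩))
    · exact Finset.mem_union_right _ (Finset.mem_filter.mpr ⟨hq, h⟩)
  have hM0card : M0.card ≤ (latBoundary L).card :=
    Finset.card_le_card (fun q hq => (Finset.mem_filter.mp hq).2)
  have hM1card : M1.card ≤ (latBoundary L).card := by
    set g : ℤ × ℤ → ℤ × ℤ := fun q =>
      if h : (q.1 + 1, q.2) ∈ L then Classical.choose (exists_boundary_runH L h) else q with hg
    have hgspec : ∀ q : ℤ × ℤ, (q.1 + 1, q.2) ∈ L →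
        (g q).2 = q.2 ∧ q.1 < (g q).1 ∧ g q ∈ latBoundary L ∧
          ∀ i : ℤ, q.1 < i → i ≤ (g q).1 → (i, q.2) ∈ L := by
      intro q h
      rw [hg]
      simp only [dif_pos h]
      exact Classical.choose_spec (exists_boundary_runH L h)
    apply Finset.card_le_card_of_injOn g
    · intro q hq
      rw [hM1, Finset.mem_coe, Finset.mem_filter] at hq
      exact (hgspec q hq.2.2).2.2.1
    · intro q hq q' hq' heq
      simp only [Finset.coe_filter, Set.mem_setOf_eq, hM1, Finset.mem_filter] at hq hq'
      have s1 := hgspec q hq.2.2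
      have s2 := hgspec q' hq'.2.2
      rw [heq] at s1
      have hy : q.2 = q'.2 := by rw [← s1.1, ← s2.1]
      rcases lt_trichotomy q.1 q'.1 with hlt | he | hgt
      · exfalso
        have : (q'.1, q.2) ∈ L := s1.2.2.2 q'.1 hlt (le_of_lt s2.2.1)
        rw [hy] at this
        exact hq'.2.1 (by simpa using this)
      · exact Prod.ext he hy
      · exfalso
        have : (q.1, q'.2) ∈ L := s2.2.2.2 q.1 hgt (le_of_lt s1.2.1)
        rw [← hy] at this
        exact hq.2.1 (by simpa using this)
  have hM2card : M2.card ≤ (latBoundary L).card := by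
    set g : ℤ × ℤ → ℤ × ℤ := fun q =>
      if h : (q.1, q.2 + 1) ∈ L then Classical.choose (exists_boundary_runV L h) else q with hg
    have hgspec : ∀ q : ℤ × ℤ, (q.1, q.2 + 1) ∈ L →
        (g q).1 = q.1 ∧ q.2 < (g q).2 ∧ g q ∈ latBoundary L ∧
          ∀ i : ℤ, q.2 < i → i ≤ (g q).2 → (q.1, i) ∈ L := by
      intro q h
      rw [hg]
      simp only [dif_pos h]
      exact Classical.choose_spec (exists_boundary_runV L h)
    apply Finset.card_le_card_of_injOn g
    · intro q hq
      rw [hM2, Finset.mem_coe, Finset.mem_filter] at hq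
      exact (hgspec q hq.2.2).2.2.1
    · intro q hq q' hq' heq
      simp only [Finset.coe_filter, Set.mem_setOf_eq, hM2, Finset.mem_filter] at hq hq'
      have s1 := hgspec q hq.2.2
      have s2 := hgspec q' hq'.2.2
      rw [heq] at s1
      have hy : q.1 = q'.1 := by rw [← s1.1, ← s2.1]
      rcases lt_trichotomy q.2 q'.2 with hlt | he | hgt
      · exfalso
        have : (q.1, q'.2) ∈ L := s1.2.2.2 q'.2 hlt (le_of_lt s2.2.1)
        rw [hy] at this
        exact hq'.2.1 (by simpa using this)
      · exact Prod.ext hy he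
      · exfalso
        have : (q'.1, q.2) ∈ L := s2.2.2.2 q.2 hgt (le_of_lt s1.2.1)
        rw [← hy] at this
        exact hq.2.1 (by simpa using this)
  have hGcard : G.card ≤ 3 * (latBoundary L).card := by
    calc G.card = M.card := hcardGM
      _ ≤ (M0 ∪ M1 ∪ M2).card := Finset.card_le_card hMsub
      _ ≤ (M0 ∪ M1).card + M2.card := Finset.card_union_le _ _
      _ ≤ M0.card + M1.card + M2.card := by
          have := Finset.card_union_le M0 M1; omega
      _ ≤ 3 * (latBoundary L).card := by omega
  calc betaKL k l L ≤ k * l * G.card := step1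
    _ ≤ k * l * (3 * (latBoundary L).card) := Nat.mul_le_mul_left _ hGcard

lemma betaKL_le_card (k l : ℕ) (L : Finset (ℤ × ℤ)) : betaKL k l L ≤ L.card :=
  Finset.card_le_card (Finset.sdiff_subset)

lemma boundary_le_card (L : Finset (ℤ × ℤ)) : (latBoundary L).card ≤ L.card :=
  Finset.card_le_card (Finset.sdiff_subset)

lemma ratio_nonneg (a b : ℕ) : (0 : ℝ) ≤ (a : ℝ) / (b : ℝ) := by positivity

lemma ratio_le_one {a b : ℕ} (h : a ≤ b) : (a : ℝ) / (b : ℝ) ≤ 1 := by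
  rcases Nat.eq_zero_or_pos b with rfl | hb
  · simp
  · rw [div_le_one (by exact_mod_cast hb)]
    exact_mod_cast h

/-- Lemma 3.1: for an expanding system `Ω`,
`limsup β_{k,l}(n)/|Ω(n)| = 0` for all `k,l ≥ 1` iff `limsup |∂Ω(n)|/|Ω(n)| = 0`. -/
theorem beta_ratio_limsup_zero_iff_boundary_ratio_limsup_zero
    (Ω : ℕ → Finset (ℤ × ℤ)) (hΩ : IsExpandingSystem Ω) :
    (∀ k l : ℕ, 1 ≤ k → 1 ≤ l →
        Filter.limsup (fun n => (betaKL k l (Ω n) : ℝ) / ((Ω n).card : ℝ)) Filter.atTop = 0) ↔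
      Filter.limsup
        (fun n => ((latBoundary (Ω n)).card : ℝ) / ((Ω n).card : ℝ)) Filter.atTop = 0 := by
  set g : ℕ → ℝ := fun n => ((latBoundary (Ω n)).card : ℝ) / ((Ω n).card : ℝ) with hgdef
  have hg0 : ∀ n, 0 ≤ g n := fun n => ratio_nonneg _ _
  have hg1 : ∀ n, g n ≤ 1 := fun n => ratio_le_one (boundary_le_card _)
  have hgb : IsBoundedUnder (· ≤ ·) atTop g := isBoundedUnder_of ⟨1, hg1⟩
  have hgcb : IsCoboundedUnder (· ≤ ·) atTop g :=
    IsBoundedUnder.isCoboundedUnder_le (isBoundedUnder_of ⟨0, hg0⟩)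
  have hgcb' : IsCoboundedUnder (· ≥ ·) atTop g :=
    IsBoundedUnder.isCoboundedUnder_ge hgb
  constructor
  · intro h
    refine le_antisymm ?_ (le_limsup_of_frequently_le (Frequently.of_forall hg0) hgb)
    by_contra hcon
    push_neg at hcon
    set ε := limsup g atTop with hε
    have hεpos : 0 < ε := hcon
    obtain ⟨k, hk⟩ := exists_nat_gt (4 / ε)
    have hk1 : 1 ≤ k := by
      have : (0 : ℝ) < 4 / ε := by positivity
      have : (0 : ℝ) < k := lt_trans this hk
      exact_mod_cast Nat.one_le_iff_ne_zero.mpr (by exact_mod_cast this.ne')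
    have hkR : (0 : ℝ) < k := by exact_mod_cast hk1
    have hkε : 2 / (k : ℝ) < ε / 2 := by
      rw [div_lt_div_iff₀ hkR (by norm_num : (0:ℝ) < 2)]
      rw [div_lt_iff₀ hεpos] at hk
      nlinarith
    -- pointwise bound
    have hpw : ∀ n, g n ≤ (betaKL k k (Ω n) : ℝ) / ((Ω n).card : ℝ) + 2 / k := by
      intro n
      set L := Ω n with hL
      rcases Nat.eq_zero_or_pos L.card with hc | hc
      · have : (latBoundary L).card = 0 := by
          have := boundary_le_card L; omega
        simp only [hgdef, this, hc]
        simp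
        rw [← hL, this, Nat.cast_zero, zero_div]; positivity
      · have hcR : (0 : ℝ) < L.card := by exact_mod_cast hc
        have hA := lemmaA hk1 hk1 L
        have hAR : (k : ℝ) * k * (latBoundary L).card ≤
            (k : ℝ) * k * betaKL k k L + ((k : ℝ) + k) * L.card := by
          exact_mod_cast hA
        have key : ((latBoundary L).card : ℝ) * k ≤ (betaKL k k L : ℝ) * k + 2 * L.card := by
          have h1 : (k : ℝ) * (((latBoundary L).card : ℝ) * k) ≤
              (k : ℝ) * ((betaKL k k L : ℝ) * k + 2 * L.card) := by ring_nf; ring_nf at hAR; linarith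
          exact le_of_mul_le_mul_left h1 hkR
        have h2 : (((latBoundary L).card : ℝ) - betaKL k k L) / L.card ≤ 2 / k := by
          rw [div_le_div_iff₀ hcR hkR]
          linarith
        have h3 : ((latBoundary L).card : ℝ) / L.card =
            (betaKL k k L : ℝ) / L.card + (((latBoundary L).card : ℝ) - betaKL k k L) / L.card := by
          ring
        simp only [hgdef]
        rw [h3]
        linarith
    have hfb : IsBoundedUnder (· ≤ ·) atTop
        (fun n => (betaKL k k (Ω n) : ℝ) / ((Ω n).card : ℝ)) :=
      isBoundedUnder_of ⟨1, fun n => ratio_le_one (betaKL_le_card _ _ _)⟩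
    have hev : ∀ᶠ n in atTop, (betaKL k k (Ω n) : ℝ) / ((Ω n).card : ℝ) < ε / 2 := by
      apply eventually_lt_of_limsup_lt _ hfb
      rw [h k k hk1 hk1]
      positivity
    have : limsup g atTop ≤ ε / 2 + 2 / k := by
      apply limsup_le_of_le hgcb
      filter_upwards [hev] with n hn
      exact (hpw n).trans (by linarith)
    rw [← hε] at this
    linarith
  · intro h k l hk hl
    have hf0 : ∀ n, 0 ≤ (betaKL k l (Ω n) : ℝ) / ((Ω n).card : ℝ) := fun n => ratio_nonneg _ _
    have hfb : IsBoundedUnder (· ≤ ·) atTop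
        (fun n => (betaKL k l (Ω n) : ℝ) / ((Ω n).card : ℝ)) :=
      isBoundedUnder_of ⟨1, fun n => ratio_le_one (betaKL_le_card _ _ _)⟩
    have hfcb : IsCoboundedUnder (· ≤ ·) atTop
        (fun n => (betaKL k l (Ω n) : ℝ) / ((Ω n).card : ℝ)) :=
      IsBoundedUnder.isCoboundedUnder_le (isBoundedUnder_of ⟨0, hf0⟩)
    refine le_antisymm ?_ (le_limsup_of_frequently_le (Frequently.of_forall hf0) hfb)
    by_contra hcon
    push_neg at hcon
    set ε := limsup (fun n => (betaKL k l (Ω n) : ℝ) / ((Ω n).card : ℝ)) atTop with hε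
    have hεpos : 0 < ε := hcon
    set C : ℝ := 3 * k * l with hC
    have hCpos : 0 < C := by
      have h1 : (1 : ℝ) ≤ k := by exact_mod_cast hk
      have h2 : (1 : ℝ) ≤ l := by exact_mod_cast hl
      rw [hC]; nlinarith
    have hpw : ∀ n, (betaKL k l (Ω n) : ℝ) / ((Ω n).card : ℝ) ≤ C * g n := by
      intro n
      rcases Nat.eq_zero_or_pos (Ω n).card with hc | hc
      · have hz : betaKL k l (Ω n) = 0 := by have := betaKL_le_card k l (Ω n); omega
        have hz2 : (betaKL k l (Ω n) : ℝ) / ((Ω n).card : ℝ) = 0 := by simp [hz]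
        rw [hz2]
        have := hg0 n
        positivity
      · have hcR : (0 : ℝ) < ((Ω n).card : ℝ) := by exact_mod_cast hc
        have hBR : (betaKL k l (Ω n) : ℝ) ≤
            (k : ℝ) * l * (3 * ((latBoundary (Ω n)).card : ℝ)) := by
          exact_mod_cast lemmaB hk hl (Ω n)
        simp only [hgdef]
        rw [div_le_iff₀ hcR, hC]
        have heq : 3 * (k : ℝ) * l * (((latBoundary (Ω n)).card : ℝ) / ((Ω n).card : ℝ)) *
            ((Ω n).card : ℝ) = 3 * (k : ℝ) * l * ((latBoundary (Ω n)).card : ℝ) := by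
          field_simp
        rw [heq]
        linarith
    have hev : ∀ᶠ n in atTop, g n < ε / (2 * C) := by
      apply eventually_lt_of_limsup_lt _ hgb
      rw [h]
      positivity
    have : ε ≤ ε / 2 := by
      rw [hε]
      apply limsup_le_of_le hfcb
      filter_upwards [hev] with n hn
      have h1 : C * g n < C * (ε / (2 * C)) := mul_lt_mul_of_pos_left hn hCpos
      have h2 : C * (ε / (2 * C)) = ε / 2 := by field_simp
      have h3 := (hpw n).trans h1.le
      rw [h2] at h3
      exact h3
    linarith
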